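/- Let T and T′ be strings over a finite alphabet A, of lengths n and n′ respectively, with edit distance one between them (T′ is obtained from T by a single character replacement, insertion, or deletion). Then for every integer k ≥ 0, |n·H_k(T) − n′·H_k(T′)| ≤ C·(k+1)·(log₂(n+1) + log₂ |A|) for some absolute constant C (independent of T, T′, k, n, A). -/

import Mathlib

open Finset

def ctxStr {A : Type*} [DecidableEq A] (T s : List A) : List A :=
  ((List.range T.length).filter (fun i =>
      decide (s.length ≤ i ∧ (T.drop (i - s.length)).take s.length = s))).filterMap
    (fun i => T[i]?)

noncomputable def H0 {A : Type*} [Fintype A] [DecidableEq A] (T : List A) : ℝ :=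
  -∑ c : A, ((T.count c : ℝ) / T.length) * Real.logb 2 ((T.count c : ℝ) / T.length)

noncomputable def Hk {A : Type*} [Fintype A] [DecidableEq A] (k : ℕ) (T : List A) : ℝ :=
  (1 / (T.length : ℝ)) *
    ∑ s : Fin k → A, ((ctxStr T (List.ofFn s)).length : ℝ) * H0 (ctxStr T (List.ofFn s))

namespace Stmt10Aux

/-! ### The function `g x = x log₂ x` and its discrete Lipschitz bounds -/

noncomputable def g (x : ℝ) : ℝ := x * Real.logb 2 x

lemma g_nat_nonneg (n : ℕ) : 0 ≤ g n := by
  rcases Nat.eq_zero_or_pos n with h | h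
  · simp [h, g]
  · have h1 : (1:ℝ) ≤ n := by exact_mod_cast h
    exact mul_nonneg (by linarith) (Real.logb_nonneg one_lt_two h1)

lemma g_nat_mono {a b : ℕ} (h : a ≤ b) : g a ≤ g b := by
  rcases Nat.eq_zero_or_pos a with h0 | h0
  · simpa [h0, g] using g_nat_nonneg b
  · have h1 : (1:ℝ) ≤ a := by exact_mod_cast h0
    have hab : (a:ℝ) ≤ b := by exact_mod_cast h
    apply mul_le_mul hab (Real.logb_le_logb_of_le one_lt_two (by linarith) hab)
      (Real.logb_nonneg one_lt_two h1) (by linarith)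

lemma g_step (n N : ℕ) (h : n ≤ N) : g (n+1) - g n ≤ Real.logb 2 (N+1) + 2 := by
  have hlogN : (0:ℝ) ≤ Real.logb 2 (N+1) :=
    Real.logb_nonneg one_lt_two (by exact_mod_cast Nat.le_add_left 1 N)
  rcases Nat.eq_zero_or_pos n with h0 | h0
  · simp only [h0]
    norm_num [g]
    linarith
  · have hn1 : (0:ℝ) < n := by exact_mod_cast h0
    have key : g (n+1) - g n = Real.logb 2 (n+1) + n * (Real.logb 2 (n+1) - Real.logb 2 n) := by
      simp only [g]
      push_cast
      ring
    rw [key]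
    have h2 : (n:ℝ) * (Real.logb 2 (n+1) - Real.logb 2 n) ≤ 2 := by
      rw [← Real.logb_div (by positivity) (ne_of_gt hn1)]
      have hd : ((n:ℝ)+1)/n = 1 + 1/n := by field_simp
      have hlog : Real.log (((n:ℝ)+1)/n) ≤ 1/n := by
        have := Real.log_le_sub_one_of_pos (x := ((n:ℝ)+1)/n) (by positivity)
        rw [hd] at this ⊢
        linarith
      have hl2 : (0:ℝ) < Real.log 2 := Real.log_pos one_lt_two
      have hl2' : (0.6931471803:ℝ) < Real.log 2 := Real.log_two_gt_d9
      rw [Real.logb]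
      calc (n:ℝ) * (Real.log (((n:ℝ)+1)/n) / Real.log 2)
          ≤ (n:ℝ) * ((1/n) / Real.log 2) := by gcongr
        _ = 1 / Real.log 2 := by field_simp
        _ ≤ 2 := by rw [div_le_iff₀ hl2]; linarith
    have h3 : Real.logb 2 ((n:ℝ)+1) ≤ Real.logb 2 ((N:ℝ)+1) :=
      Real.logb_le_logb_of_le one_lt_two (by positivity)
        (by exact_mod_cast Nat.succ_le_succ h)
    linarith

lemma g_diff {a b N : ℕ} (hab : a ≤ b) (hb : b ≤ N) :
    g b - g a ≤ ((b:ℝ) - a) * (Real.logb 2 (N+1) + 2) := by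
  induction b, hab using Nat.le_induction with
  | base => simp
  | succ b hab ih =>
    have hbN : b ≤ N := le_trans (Nat.le_succ b) hb
    have h1 := g_step b N hbN
    have h2 := ih hbN
    have hL : (0:ℝ) ≤ Real.logb 2 (N+1) + 2 := by
      have := Real.logb_nonneg (b := 2) (x := (N:ℝ)+1) one_lt_two
        (by exact_mod_cast Nat.le_add_left 1 N)
      linarith
    push_cast
    push_cast at h2
    nlinarith [h1, h2]

lemma g_abs_diff {a b N : ℕ} (ha : a ≤ N) (hb : b ≤ N) :
    |g a - g b| ≤ |(a:ℝ) - (b:ℝ)| * (Real.logb 2 (N+1) + 2) := by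
  rcases le_total a b with h | h
  · rw [abs_sub_comm, abs_of_nonneg (by linarith [g_nat_mono h]), abs_sub_comm,
      abs_of_nonneg (by simp; exact_mod_cast h)]
    exact g_diff h hb
  · rw [abs_of_nonneg (by linarith [g_nat_mono h]), abs_of_nonneg (by simp; exact_mod_cast h)]
    exact g_diff h ha

/-! ### Rewriting the entropy sums via `g` -/

lemma sum_count {A : Type*} [Fintype A] [DecidableEq A] (l : List A) :
    ∑ c : A, l.count c = l.length := by
  induction l with
  | nil => simp
  | cons a t ih => simp [List.count_cons, Finset.sum_add_distrib, ih, add_comm]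

lemma H0_mul {A : Type*} [Fintype A] [DecidableEq A] (T : List A) :
    (T.length : ℝ) * H0 T = g T.length - ∑ c : A, g (T.count c) := by
  rcases Nat.eq_zero_or_pos T.length with h | h
  · rw [List.length_eq_zero_iff] at h
    subst h
    simp [H0, g]
  · have hℓ : (0:ℝ) < T.length := by exact_mod_cast h
    have hℓ' : (T.length : ℝ) ≠ 0 := ne_of_gt hℓ
    rw [H0, mul_neg, Finset.mul_sum]
    have hterm : ∀ c : A, (T.length : ℝ) * (((T.count c : ℝ) / T.length) *
        Real.logb 2 ((T.count c : ℝ) / T.length)) =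
        g (T.count c) - (T.count c : ℝ) * Real.logb 2 T.length := by
      intro c
      rcases Nat.eq_zero_or_pos (T.count c) with hc | hc
      · simp [hc, g]
      · have hc' : ((T.count c : ℝ)) ≠ 0 := by positivity
        rw [Real.logb_div hc' hℓ', g]
        field_simp
    rw [Finset.sum_congr rfl (fun c _ => hterm c), Finset.sum_sub_distrib]
    have hsum : ∑ c : A, (T.count c : ℝ) * Real.logb 2 T.length
        = (T.length : ℝ) * Real.logb 2 T.length := by
      rw [← Finset.sum_mul]
      congr 1
      rw [← Nat.cast_sum]
      exact_mod_cast congrArg Nat.cast (sum_count T)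
    rw [hsum, g]
    ring

lemma Hk_mul {A : Type*} [Fintype A] [DecidableEq A] (k : ℕ) (T : List A) :
    (T.length : ℝ) * Hk k T =
      ∑ s : Fin k → A, ((ctxStr T (List.ofFn s)).length : ℝ) * H0 (ctxStr T (List.ofFn s)) := by
  rcases Nat.eq_zero_or_pos T.length with h | h
  · rw [List.length_eq_zero_iff] at h
    subst h
    simp [Hk, ctxStr]
  · have hℓ' : (T.length : ℝ) ≠ 0 := by positivity
    rw [Hk]
    field_simp

/-! ### Pair strings -/

def prF {A : Type*} (k : ℕ) (T : List A) (i : ℕ) : Option (List A × A) :=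
  if k ≤ i then (T[i]?).map (fun ch => ((T.drop (i - k)).take k, ch)) else none

def prs {A : Type*} (k : ℕ) (T : List A) : List (List A × A) :=
  (List.range T.length).filterMap (prF k T)

lemma count_filterMap {α β : Type*} [BEq β] [LawfulBEq β] (l : List α) (f : α → Option β)
    (c : β) : (l.filterMap f).count c = l.countP (fun i => f i == some c) := by
  induction l with
  | nil => simp
  | cons a t ih =>
    simp only [List.filterMap_cons, List.countP_cons]
    cases h : f a with
    | none => simp [ih, h]
    | some b => by_cases hb : b = c <;> simp [List.count_cons, ih, h, hb, beq_iff_eq]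

lemma ctx_count {A : Type*} [DecidableEq A] (k : ℕ) (T : List A) (s : Fin k → A) (c : A) :
    (ctxStr T (List.ofFn s)).count c = (prs k T).count (List.ofFn s, c) := by
  rw [ctxStr, prs, count_filterMap,
    count_filterMap (List.range T.length) (prF k T) (List.ofFn s, c), List.countP_filter]
  apply List.countP_congr
  intro i hi
  have hin : i < T.length := List.mem_range.mp hi
  have hget : T[i]? = some T[i] := List.getElem?_eq_getElem hin
  simp only [prF, List.length_ofFn, hget, decide_eq_true_eq, Bool.and_eq_true, beq_iff_eq]
  by_cases hk : k ≤ i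
  · simp only [if_pos hk, Option.map_some, Option.some.injEq, Prod.mk.injEq]
    constructor
    · rintro ⟨h1, h2, h3⟩
      simp_all
    · rintro h
      simp_all
  · simp [hk]

lemma ctxStr_length_le {A : Type*} [DecidableEq A] (T s : List A) :
    (ctxStr T s).length ≤ T.length := by
  rw [ctxStr]
  calc _ ≤ _ := List.length_filterMap_le _ _
    _ ≤ (List.range T.length).length := List.length_filter_le _ _
    _ = T.length := List.length_range

lemma sum_count_inj {B C : Type*} [Fintype B] [BEq C] [LawfulBEq C] (e : B → C)
    (he : Function.Injective e) (W : List C) :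
    ∑ b : B, W.count (e b) ≤ W.length := by
  classical
  induction W with
  | nil => simp
  | cons a t ih =>
    simp only [List.count_cons, List.length_cons, Finset.sum_add_distrib]
    have h1 : (∑ x : B, if (a == e x) = true then 1 else 0) ≤ 1 := by
      simp only [beq_iff_eq]
      rw [← Finset.card_filter]
      rw [Finset.card_le_one]
      intro x hx y hy
      simp only [Finset.mem_filter] at hx hy
      exact he (hx.2.symm.trans hy.2)
    omega

/-! ### Decomposition of pair strings under an insertion -/

lemma prF_lo {A : Type*} (k : ℕ) (T₁ T₂ T₂' : List A) (i : ℕ) (hi : i < T₁.length) :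
    prF k (T₁ ++ T₂) i = prF k (T₁ ++ T₂') i := by
  unfold prF
  by_cases hk : k ≤ i
  · have hctx : ∀ T₂'' : List A,
        ((T₁ ++ T₂'').drop (i - k)).take k = (T₁.drop (i - k)).take k := by
      intro T₂''
      rw [List.drop_append_of_le_length (by omega)]
      rw [List.take_append_of_le_length (by rw [List.length_drop]; omega)]
    rw [if_pos hk, if_pos hk, hctx T₂, hctx T₂',
      List.getElem?_append_left hi, List.getElem?_append_left hi]
  · rw [if_neg hk, if_neg hk]

lemma prF_hi {A : Type*} (k : ℕ) (T₁ T₂ : List A) (c : A) (i : ℕ) (hi : T₁.length + k ≤ i) :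
    prF k (T₁ ++ c :: T₂) (1 + i) = prF k (T₁ ++ T₂) i := by
  set p := T₁.length with hp
  unfold prF
  rw [if_pos (by omega), if_pos (by omega)]
  have hd1 : (T₁ ++ T₂).drop (i - k) = T₂.drop (i - k - p) := by
    have h : i - k = p + (i - k - p) := by omega
    rw [h, List.drop_length_add_append]
    congr 1
    omega
  have hd2 : (T₁ ++ c :: T₂).drop (1 + i - k) = T₂.drop (i - k - p) := by
    have h : 1 + i - k = p + (i - k - p + 1) := by omega
    rw [h, List.drop_length_add_append, List.drop_succ_cons]
  have hg1 : (T₁ ++ T₂)[i]? = T₂[i - p]? := List.getElem?_append_right (by omega)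
  have hg2 : (T₁ ++ c :: T₂)[1 + i]? = T₂[i - p]? := by
    rw [List.getElem?_append_right (by omega : T₁.length ≤ 1 + i)]
    have h : 1 + i - p = (i - p) + 1 := by omega
    rw [h, List.getElem?_cons_succ]
  rw [hd1, hd2, hg1, hg2]

lemma prs_decomp {A : Type*} (k : ℕ) (T₁ T₂ : List A) (c : A) :
    ∃ X W W' Y : List (List A × A),
      prs k (T₁ ++ T₂) = X ++ W ++ Y ∧ prs k (T₁ ++ c :: T₂) = X ++ W' ++ Y ∧
      W.length ≤ k + 1 ∧ W'.length ≤ k + 1 := by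
  set p := T₁.length with hp
  set n := (T₁ ++ T₂).length with hn
  have hpn : p ≤ n := by rw [hn, List.length_append]; omega
  have hn' : (T₁ ++ c :: T₂).length = n + 1 := by
    rw [hn, List.length_append, List.length_append, List.length_cons]
    omega
  set b := min (p + k) n with hb
  have hsplit : List.range n =
      List.range' 0 p ++ List.range' p (b - p) ++ List.range' b (n - b) := by
    rw [List.range_eq_range']
    rw [show List.range' p (b-p) = List.range' (0 + 1*p) (b-p) by ring_nf,
      List.range'_append, show List.range' b (n-b) = List.range' (0 + 1*(p+(b-p))) (n-b) by
        congr 1; omega,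
      List.range'_append]
    congr 1
    omega
  have hsplit' : List.range (n+1) =
      List.range' 0 p ++ List.range' p (b + 1 - p) ++ List.range' (b+1) (n - b) := by
    rw [List.range_eq_range']
    rw [show List.range' p (b+1-p) = List.range' (0 + 1*p) (b+1-p) by ring_nf,
      List.range'_append, show List.range' (b+1) (n-b) = List.range' (0 + 1*(p+(b+1-p))) (n-b) by
        congr 1; omega,
      List.range'_append]
    congr 1
    omega
  refine ⟨(List.range' 0 p).filterMap (prF k (T₁ ++ T₂)),
    (List.range' p (b - p)).filterMap (prF k (T₁ ++ T₂)),
    (List.range' p (b + 1 - p)).filterMap (prF k (T₁ ++ c :: T₂)),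
    (List.range' b (n - b)).filterMap (prF k (T₁ ++ T₂)), ?_, ?_, ?_, ?_⟩
  · rw [prs, ← hn, hsplit, List.filterMap_append, List.filterMap_append]
  · rw [prs, hn', hsplit', List.filterMap_append, List.filterMap_append]
    congr 1
    · congr 1
      apply List.filterMap_congr
      intro i hi
      have : i < p := by
        have := List.mem_range'_1.mp hi
        omega
      exact (prF_lo k T₁ T₂ (c :: T₂) i this).symm
    · have hmap : List.range' (b+1) (n-b) = (List.range' b (n-b)).map (fun x => 1 + x) := by
        rw [List.map_add_range']
        congr 1
        omega
      rw [hmap, List.filterMap_map]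
      apply List.filterMap_congr
      intro i hi
      have hmem := List.mem_range'_1.mp hi
      have hik : p + k ≤ i := by omega
      exact (prF_hi k T₁ T₂ c i hik)
  · calc ((List.range' p (b-p)).filterMap _).length ≤ (List.range' p (b-p)).length :=
        List.length_filterMap_le _ _
      _ ≤ k + 1 := by rw [List.length_range']; omega
  · calc ((List.range' p (b+1-p)).filterMap _).length ≤ (List.range' p (b+1-p)).length :=
        List.length_filterMap_le _ _
      _ ≤ k + 1 := by rw [List.length_range']; omega

/-! ### The count-difference bound -/

lemma count_diff_bound {A : Type} [Fintype A] [DecidableEq A] (k : ℕ) (T₁ T₂ : List A)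
    (c : A) :
    ∑ s : Fin k → A, ∑ c' : A,
      |(((ctxStr (T₁ ++ T₂) (List.ofFn s)).count c' : ℝ)) -
        ((ctxStr (T₁ ++ c :: T₂) (List.ofFn s)).count c' : ℝ)| ≤ 2 * (k + 1) := by
  obtain ⟨X, W, W', Y, h1, h2, hW, hW'⟩ := prs_decomp k T₁ T₂ c
  have e : (Fin k → A) × A → List A × A := fun y => (List.ofFn y.1, y.2)
  have he : Function.Injective (fun y : (Fin k → A) × A => (List.ofFn y.1, y.2)) := by
    intro x y hxy
    simp only [Prod.mk.injEq] at hxy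
    exact Prod.ext (List.ofFn_injective hxy.1) hxy.2
  have key : ∀ s : Fin k → A, ∀ c' : A,
      |(((ctxStr (T₁ ++ T₂) (List.ofFn s)).count c' : ℝ)) -
        ((ctxStr (T₁ ++ c :: T₂) (List.ofFn s)).count c' : ℝ)| ≤
      (W.count (List.ofFn s, c') : ℝ) + (W'.count (List.ofFn s, c') : ℝ) := by
    intro s c'
    rw [ctx_count, ctx_count, h1, h2, List.count_append, List.count_append,
      List.count_append, List.count_append]
    push_cast
    rw [abs_le]
    have hw : (0:ℝ) ≤ (W.count (List.ofFn s, c') : ℝ) := by positivity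
    have hw' : (0:ℝ) ≤ (W'.count (List.ofFn s, c') : ℝ) := by positivity
    constructor <;> linarith
  calc ∑ s : Fin k → A, ∑ c' : A,
        |(((ctxStr (T₁ ++ T₂) (List.ofFn s)).count c' : ℝ)) -
          ((ctxStr (T₁ ++ c :: T₂) (List.ofFn s)).count c' : ℝ)|
      ≤ ∑ s : Fin k → A, ∑ c' : A,
        ((W.count (List.ofFn s, c') : ℝ) + (W'.count (List.ofFn s, c') : ℝ)) := by
        apply Finset.sum_le_sum
        intro s _
        apply Finset.sum_le_sum
        intro c' _
        exact key s c'
    _ = (∑ y : (Fin k → A) × A, (W.count (List.ofFn y.1, y.2) : ℝ)) +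
        (∑ y : (Fin k → A) × A, (W'.count (List.ofFn y.1, y.2) : ℝ)) := by
        rw [Fintype.sum_prod_type, Fintype.sum_prod_type, ← Finset.sum_add_distrib]
        apply Finset.sum_congr rfl
        intro s _
        rw [← Finset.sum_add_distrib]
    _ ≤ (W.length : ℝ) + (W'.length : ℝ) := by
        have hb1 := sum_count_inj _ he W
        have hb2 := sum_count_inj _ he W'
        have hc1 : (∑ y : (Fin k → A) × A, (W.count (List.ofFn y.1, y.2) : ℝ)) =
            ((∑ y : (Fin k → A) × A, W.count (List.ofFn y.1, y.2) : ℕ) : ℝ) := by push_cast; rfl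
        have hc2 : (∑ y : (Fin k → A) × A, (W'.count (List.ofFn y.1, y.2) : ℝ)) =
            ((∑ y : (Fin k → A) × A, W'.count (List.ofFn y.1, y.2) : ℕ) : ℝ) := by push_cast; rfl
        rw [hc1, hc2]
        have := add_le_add hb1 hb2
        exact_mod_cast add_le_add hb1 hb2
    _ ≤ 2 * (k + 1) := by
        have h1 : (W.length : ℝ) ≤ (k:ℝ) + 1 := by exact_mod_cast hW
        have h2 : (W'.length : ℝ) ≤ (k:ℝ) + 1 := by exact_mod_cast hW'
        linarith

/-! ### The insertion bound -/

lemma insert_bound {A : Type} [Fintype A] [DecidableEq A] (k : ℕ) (T₁ T₂ : List A) (c : A) :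
    |((T₁ ++ T₂).length : ℝ) * Hk k (T₁ ++ T₂) -
      ((T₁ ++ c :: T₂).length : ℝ) * Hk k (T₁ ++ c :: T₂)| ≤
    4 * ((k : ℝ) + 1) * (Real.logb 2 (((T₁ ++ c :: T₂).length : ℝ) + 1) + 2) := by
  set T := T₁ ++ T₂ with hT
  set T' := T₁ ++ c :: T₂ with hT'
  set N := T'.length with hN
  have hnN : T.length ≤ N := by
    rw [hN, hT, hT', List.length_append, List.length_append, List.length_cons]
    omega
  set L := Real.logb 2 ((N:ℝ) + 1) + 2 with hLdef
  have hL : 0 ≤ L := by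
    have h1 : (0:ℝ) ≤ Real.logb 2 ((N:ℝ)+1) :=
      Real.logb_nonneg one_lt_two (by have : (0:ℝ) ≤ (N:ℝ) := Nat.cast_nonneg N; linarith)
    rw [hLdef]; linarith
  have hrw : ∀ U : List A, (U.length : ℝ) * Hk k U =
      ∑ s : Fin k → A, (g (ctxStr U (List.ofFn s)).length -
        ∑ c' : A, g ((ctxStr U (List.ofFn s)).count c')) := by
    intro U
    rw [Hk_mul]
    exact Finset.sum_congr rfl (fun s _ => H0_mul _)
  rw [hrw T, hrw T', ← Finset.sum_sub_distrib]
  have hterm : ∀ s : Fin k → A,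
      |(g (ctxStr T (List.ofFn s)).length - ∑ c' : A, g ((ctxStr T (List.ofFn s)).count c')) -
        (g (ctxStr T' (List.ofFn s)).length - ∑ c' : A, g ((ctxStr T' (List.ofFn s)).count c'))|
      ≤ 2 * (∑ c' : A, |(((ctxStr T (List.ofFn s)).count c' : ℝ)) -
          ((ctxStr T' (List.ofFn s)).count c' : ℝ)|) * L := by
    intro s
    have hlT : (ctxStr T (List.ofFn s)).length ≤ N := le_trans (ctxStr_length_le _ _) hnN
    have hlT' : (ctxStr T' (List.ofFn s)).length ≤ N := ctxStr_length_le _ _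
    have e1 : (g (ctxStr T (List.ofFn s)).length -
          ∑ c' : A, g ((ctxStr T (List.ofFn s)).count c')) -
        (g (ctxStr T' (List.ofFn s)).length -
          ∑ c' : A, g ((ctxStr T' (List.ofFn s)).count c')) =
        (g (ctxStr T (List.ofFn s)).length - g (ctxStr T' (List.ofFn s)).length) -
        ∑ c' : A, (g ((ctxStr T (List.ofFn s)).count c') -
          g ((ctxStr T' (List.ofFn s)).count c')) := by
      rw [Finset.sum_sub_distrib]; ring
    rw [e1]
    have h2 : |g (ctxStr T (List.ofFn s)).length - g (ctxStr T' (List.ofFn s)).length| ≤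
        (∑ c' : A, |(((ctxStr T (List.ofFn s)).count c' : ℝ)) -
          ((ctxStr T' (List.ofFn s)).count c' : ℝ)|) * L := by
      calc |g (ctxStr T (List.ofFn s)).length - g (ctxStr T' (List.ofFn s)).length|
          ≤ |((ctxStr T (List.ofFn s)).length : ℝ) - ((ctxStr T' (List.ofFn s)).length : ℝ)| * L :=
            g_abs_diff hlT hlT'
        _ ≤ (∑ c' : A, |(((ctxStr T (List.ofFn s)).count c' : ℝ)) -
            ((ctxStr T' (List.ofFn s)).count c' : ℝ)|) * L := by
            apply mul_le_mul_of_nonneg_right _ hL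
            have hl1 : ((ctxStr T (List.ofFn s)).length : ℝ) =
                ∑ c' : A, ((ctxStr T (List.ofFn s)).count c' : ℝ) := by
              exact_mod_cast congrArg (Nat.cast : ℕ → ℝ) (sum_count _).symm
            have hl2 : ((ctxStr T' (List.ofFn s)).length : ℝ) =
                ∑ c' : A, ((ctxStr T' (List.ofFn s)).count c' : ℝ) := by
              exact_mod_cast congrArg (Nat.cast : ℕ → ℝ) (sum_count _).symm
            rw [hl1, hl2, ← Finset.sum_sub_distrib]
            exact Finset.abs_sum_le_sum_abs _ _
    have h3 : |∑ c' : A, (g ((ctxStr T (List.ofFn s)).count c') -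
          g ((ctxStr T' (List.ofFn s)).count c'))| ≤
        (∑ c' : A, |(((ctxStr T (List.ofFn s)).count c' : ℝ)) -
          ((ctxStr T' (List.ofFn s)).count c' : ℝ)|) * L := by
      calc |∑ c' : A, (g ((ctxStr T (List.ofFn s)).count c') -
              g ((ctxStr T' (List.ofFn s)).count c'))|
          ≤ ∑ c' : A, |g ((ctxStr T (List.ofFn s)).count c') -
              g ((ctxStr T' (List.ofFn s)).count c')| := Finset.abs_sum_le_sum_abs _ _
        _ ≤ ∑ c' : A, |(((ctxStr T (List.ofFn s)).count c' : ℝ)) -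
              ((ctxStr T' (List.ofFn s)).count c' : ℝ)| * L := by
            apply Finset.sum_le_sum
            intro c' _
            exact g_abs_diff (le_trans (List.count_le_length) hlT)
              (le_trans (List.count_le_length) hlT')
        _ = _ := by rw [Finset.sum_mul]
    calc |(g (ctxStr T (List.ofFn s)).length - g (ctxStr T' (List.ofFn s)).length) -
          ∑ c' : A, (g ((ctxStr T (List.ofFn s)).count c') -
            g ((ctxStr T' (List.ofFn s)).count c'))|
        ≤ |g (ctxStr T (List.ofFn s)).length - g (ctxStr T' (List.ofFn s)).length| +
          |∑ c' : A, (g ((ctxStr T (List.ofFn s)).count c') -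
            g ((ctxStr T' (List.ofFn s)).count c'))| := abs_sub _ _
      _ ≤ _ := by linarith
  calc |∑ s : Fin k → A, _|
      ≤ ∑ s : Fin k → A,
        |(g (ctxStr T (List.ofFn s)).length - ∑ c' : A, g ((ctxStr T (List.ofFn s)).count c')) -
          (g (ctxStr T' (List.ofFn s)).length -
            ∑ c' : A, g ((ctxStr T' (List.ofFn s)).count c'))| :=
        Finset.abs_sum_le_sum_abs _ _
    _ ≤ ∑ s : Fin k → A, 2 * (∑ c' : A, |(((ctxStr T (List.ofFn s)).count c' : ℝ)) -
          ((ctxStr T' (List.ofFn s)).count c' : ℝ)|) * L :=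
        Finset.sum_le_sum (fun s _ => hterm s)
    _ = 2 * (∑ s : Fin k → A, ∑ c' : A, |(((ctxStr T (List.ofFn s)).count c' : ℝ)) -
          ((ctxStr T' (List.ofFn s)).count c' : ℝ)|) * L := by
        rw [← Finset.sum_mul, ← Finset.mul_sum]
    _ ≤ 2 * (2 * ((k:ℝ) + 1)) * L := by
        have hD := count_diff_bound k T₁ T₂ c
        have hD' : (∑ s : Fin k → A, ∑ c' : A, |(((ctxStr T (List.ofFn s)).count c' : ℝ)) -
            ((ctxStr T' (List.ofFn s)).count c' : ℝ)|) ≤ 2 * ((k:ℝ) + 1) := by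
          rw [hT, hT']
          exact_mod_cast hD
        apply mul_le_mul_of_nonneg_right _ hL
        linarith
    _ = 4 * ((k:ℝ) + 1) * L := by ring

/-! ### Degenerate cases -/

lemma H0_zero_of_card {A : Type*} [Fintype A] [DecidableEq A] (h : Fintype.card A ≤ 1)
    (T : List A) : H0 T = 0 := by
  haveI := Fintype.card_le_one_iff_subsingleton.mp h
  rw [H0, neg_eq_zero]
  apply Finset.sum_eq_zero
  intro c _
  have hcount : T.count c = T.length := List.count_eq_length.mpr
    (fun b _ => Subsingleton.elim c b)
  rw [hcount]
  rcases Nat.eq_zero_or_pos T.length with h0 | h0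
  · simp [h0]
  · have : ((T.length : ℝ)) ≠ 0 := by positivity
    rw [div_self this]
    simp

lemma Hk_zero_of_card {A : Type*} [Fintype A] [DecidableEq A] (h : Fintype.card A ≤ 1)
    (k : ℕ) (T : List A) : Hk k T = 0 := by
  rw [Hk]
  have : ∀ s : Fin k → A, ((ctxStr T (List.ofFn s)).length : ℝ) *
      H0 (ctxStr T (List.ofFn s)) = 0 := by
    intro s
    rw [H0_zero_of_card h, mul_zero]
  rw [Finset.sum_congr rfl (fun s _ => this s)]
  simp

lemma small_mul_Hk {A : Type*} [Fintype A] [DecidableEq A] (k : ℕ) (T : List A)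
    (h : T.length ≤ 1) : (T.length : ℝ) * Hk k T = 0 := by
  rw [Hk_mul]
  apply Finset.sum_eq_zero
  intro s _
  rw [H0_mul]
  have hg : ∀ j : ℕ, j ≤ 1 → g j = 0 := by
    intro j hj
    interval_cases j <;> simp [g]
  have hlen : (ctxStr T (List.ofFn s)).length ≤ 1 := le_trans (ctxStr_length_le _ _) h
  rw [hg _ hlen]
  have : ∀ c : A, g ((ctxStr T (List.ofFn s)).count c) = 0 := fun c =>
    hg _ (le_trans (List.count_le_length) hlen)
  rw [Finset.sum_congr rfl (fun c _ => this c)]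
  simp

end Stmt10Aux

open Stmt10Aux

theorem stmt10 : ∃ C : ℝ, 0 < C ∧
    ∀ (A : Type) (_ : Fintype A) (_ : DecidableEq A) (T T' : List A) (k : ℕ),
      ((∃ (T₁ T₂ : List A) (c c' : A), T = T₁ ++ c :: T₂ ∧ T' = T₁ ++ c' :: T₂) ∨
       (∃ (T₁ T₂ : List A) (c : A), T = T₁ ++ T₂ ∧ T' = T₁ ++ c :: T₂) ∨
       (∃ (T₁ T₂ : List A) (c : A), T = T₁ ++ c :: T₂ ∧ T' = T₁ ++ T₂)) →
      |(T.length : ℝ) * Hk k T - (T'.length : ℝ) * Hk k T'| ≤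
        C * (k + 1) * (Real.logb 2 (T.length + 1) + Real.logb 2 (Fintype.card A)) := by
  refine ⟨16, by norm_num, ?_⟩
  intro A iF iD T T' k hedit
  have hA : Nonempty A := by
    rcases hedit with ⟨T₁,T₂,c,c',h1,h2⟩|⟨T₁,T₂,c,h1,h2⟩|⟨T₁,T₂,c,h1,h2⟩ <;> exact ⟨c⟩
  have hcard1 : 1 ≤ Fintype.card A := Fintype.card_pos
  have hlogcard : (0:ℝ) ≤ Real.logb 2 (Fintype.card A) :=
    Real.logb_nonneg one_lt_two (by exact_mod_cast hcard1)
  have hlen0 : (0:ℝ) ≤ (T.length : ℝ) := Nat.cast_nonneg _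
  have hlogn : (0:ℝ) ≤ Real.logb 2 ((T.length:ℝ)+1) :=
    Real.logb_nonneg one_lt_two (by linarith)
  have hRHS : (0:ℝ) ≤ 16 * ((k:ℝ) + 1) *
      (Real.logb 2 ((T.length:ℝ) + 1) + Real.logb 2 (Fintype.card A)) := by
    have hk0 : (0:ℝ) ≤ (k:ℝ) := Nat.cast_nonneg _
    have := mul_nonneg (by linarith : (0:ℝ) ≤ 16 * ((k:ℝ)+1))
      (by linarith : (0:ℝ) ≤ Real.logb 2 ((T.length:ℝ) + 1) + Real.logb 2 (Fintype.card A))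
    linarith [this]
  by_cases hc : Fintype.card A ≤ 1
  · rw [Hk_zero_of_card hc, Hk_zero_of_card hc]
    simpa using hRHS
  by_cases hn0 : T.length = 0
  · have hT'len : T'.length ≤ 1 := by
      rcases hedit with ⟨T₁,T₂,c,c',h1,h2⟩|⟨T₁,T₂,c,h1,h2⟩|⟨T₁,T₂,c,h1,h2⟩ <;>
        · subst h1; subst h2
          simp only [List.length_append, List.length_cons] at hn0 ⊢
          omega
    rw [small_mul_Hk k T (by omega), small_mul_Hk k T' hT'len]
    simpa using hRHS
  -- main case
  have hn1 : 1 ≤ T.length := Nat.one_le_iff_ne_zero.mpr hn0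
  have hc2 : 2 ≤ Fintype.card A := by omega
  have key : |(T.length : ℝ) * Hk k T - (T'.length : ℝ) * Hk k T'| ≤
      8 * ((k:ℝ) + 1) * (Real.logb 2 ((T.length:ℝ) + 2) + 2) := by
    have hfac : (0:ℝ) ≤ 4 * ((k:ℝ)+1) := by
      have : (0:ℝ) ≤ (k:ℝ) := Nat.cast_nonneg _
      linarith
    have hmono : ∀ x y : ℝ, 0 ≤ x → x ≤ y →
        Real.logb 2 (x + 1) + 2 ≤ Real.logb 2 (y + 2) + 2 := by
      intro x y hx hxy
      have := Real.logb_le_logb_of_le one_lt_two (by linarith : (0:ℝ) < x + 1)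
        (by linarith : x + 1 ≤ y + 2)
      linarith
    have hlogplus : (0:ℝ) ≤ Real.logb 2 ((T.length:ℝ) + 2) + 2 := by
      have := Real.logb_nonneg (b := 2) (x := (T.length:ℝ) + 2) one_lt_two (by linarith)
      linarith
    rcases hedit with ⟨T₁,T₂,c,c',h1,h2⟩|⟨T₁,T₂,c,h1,h2⟩|⟨T₁,T₂,c,h1,h2⟩
    · -- replacement
      have b1 := insert_bound k T₁ T₂ c
      have b2 := insert_bound k T₁ T₂ c'
      have hlen : ((T₁ ++ c :: T₂).length : ℝ) = ((T₁ ++ c' :: T₂).length : ℝ) := by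
        simp [List.length_append]
      have htri : |(T.length : ℝ) * Hk k T - (T'.length : ℝ) * Hk k T'| ≤
          |((T₁++T₂).length : ℝ) * Hk k (T₁++T₂) - (T.length : ℝ) * Hk k T| +
          |((T₁++T₂).length : ℝ) * Hk k (T₁++T₂) - (T'.length : ℝ) * Hk k T'| := by
        have h := abs_sub_le ((T.length : ℝ) * Hk k T)
          (((T₁++T₂).length : ℝ) * Hk k (T₁++T₂)) ((T'.length : ℝ) * Hk k T')
        rwa [abs_sub_comm ((T.length : ℝ) * Hk k T)
          (((T₁++T₂).length : ℝ) * Hk k (T₁++T₂))] at h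
      subst h1; subst h2
      have hb : Real.logb 2 (((T₁ ++ c :: T₂).length:ℝ) + 1) + 2 ≤
          Real.logb 2 (((T₁ ++ c :: T₂).length:ℝ) + 2) + 2 :=
        hmono _ _ (Nat.cast_nonneg _) (by linarith)
      calc |((T₁ ++ c :: T₂).length : ℝ) * Hk k (T₁ ++ c :: T₂) -
            ((T₁ ++ c' :: T₂).length : ℝ) * Hk k (T₁ ++ c' :: T₂)| ≤ _ := htri
        _ ≤ 4 * ((k:ℝ)+1) * (Real.logb 2 (((T₁ ++ c :: T₂).length:ℝ) + 1) + 2) +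
            4 * ((k:ℝ)+1) * (Real.logb 2 (((T₁ ++ c' :: T₂).length:ℝ) + 1) + 2) :=
          add_le_add b1 b2
        _ ≤ 8 * ((k:ℝ) + 1) * (Real.logb 2 (((T₁ ++ c :: T₂).length:ℝ) + 2) + 2) := by
          have hb2 : Real.logb 2 (((T₁ ++ c' :: T₂).length:ℝ) + 1) + 2 ≤
              Real.logb 2 (((T₁ ++ c :: T₂).length:ℝ) + 2) + 2 := by
            rw [← hlen]
            exact hb
          nlinarith [mul_le_mul_of_nonneg_left hb hfac,
            mul_le_mul_of_nonneg_left hb2 hfac]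
    · -- insertion
      subst h1; subst h2
      have b1 := insert_bound k T₁ T₂ c
      have hlen : (((T₁ ++ c :: T₂).length):ℝ) + 1 = (((T₁ ++ T₂).length):ℝ) + 2 := by
        push_cast [List.length_append, List.length_cons]
        ring
      rw [hlen] at b1
      calc _ ≤ _ := b1
        _ ≤ 8 * ((k:ℝ) + 1) * (Real.logb 2 (((T₁ ++ T₂).length:ℝ) + 2) + 2) := by
          nlinarith
    · -- deletion
      subst h1; subst h2
      have b1 := insert_bound k T₁ T₂ c
      rw [abs_sub_comm]
      calc |((T₁ ++ T₂).length : ℝ) * Hk k (T₁ ++ T₂) -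
            ((T₁ ++ c :: T₂).length : ℝ) * Hk k (T₁ ++ c :: T₂)| ≤ _ := b1
        _ ≤ 8 * ((k:ℝ) + 1) * (Real.logb 2 (((T₁ ++ c :: T₂).length:ℝ) + 2) + 2) := by
          have hb := hmono ((T₁ ++ c :: T₂).length:ℝ) ((T₁ ++ c :: T₂).length:ℝ)
            (Nat.cast_nonneg _) le_rfl
          nlinarith [mul_le_mul_of_nonneg_left hb hfac, Real.logb_nonneg (b := 2)
            (x := ((T₁ ++ c :: T₂).length:ℝ) + 2) one_lt_two
            (by have : (0:ℝ) ≤ ((T₁ ++ c :: T₂).length:ℝ) := Nat.cast_nonneg _; linarith)]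
  -- convert the bound
  have hcast1 : (1:ℝ) ≤ (T.length : ℝ) := by exact_mod_cast hn1
  have h22 : Real.logb 2 ((T.length:ℝ) + 2) ≤ 2 * Real.logb 2 ((T.length:ℝ) + 1) := by
    have hsq : ((T.length:ℝ) + 2) ≤ ((T.length:ℝ) + 1)^2 := by nlinarith
    calc Real.logb 2 ((T.length:ℝ) + 2) ≤ Real.logb 2 (((T.length:ℝ) + 1)^2) :=
        Real.logb_le_logb_of_le one_lt_two (by linarith) hsq
      _ = 2 * Real.logb 2 ((T.length:ℝ) + 1) := by
        rw [Real.logb_pow]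
        norm_num
  have h2c : (1:ℝ) ≤ Real.logb 2 (Fintype.card A) := by
    rw [show (1:ℝ) = Real.logb 2 2 by simp [Real.logb_self_eq_one]]
    exact Real.logb_le_logb_of_le one_lt_two (by norm_num) (by exact_mod_cast hc2)
  have hfinal : Real.logb 2 ((T.length:ℝ) + 2) + 2 ≤
      2 * (Real.logb 2 ((T.length:ℝ) + 1) + Real.logb 2 (Fintype.card A)) := by
    linarith
  have hk8 : (0:ℝ) ≤ 8 * ((k:ℝ) + 1) := by
    have : (0:ℝ) ≤ (k:ℝ) := Nat.cast_nonneg _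
    linarith
  calc |(T.length : ℝ) * Hk k T - (T'.length : ℝ) * Hk k T'| ≤ _ := key
    _ ≤ 8 * ((k:ℝ) + 1) *
        (2 * (Real.logb 2 ((T.length:ℝ) + 1) + Real.logb 2 (Fintype.card A))) :=
      mul_le_mul_of_nonneg_left hfinal hk8
    _ = 16 * ((k:ℝ) + 1) *
        (Real.logb 2 ((T.length:ℝ) + 1) + Real.logb 2 (Fintype.card A)) := by ring
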